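/- Let m_1, m_2 be positive integers, m = lcm(m_1,m_2), and a_1, a_2 ∈ ℤ with gcd(a_1,m_1) = gcd(a_2,m_2) = 1 and |a_1 − a_2| = 1. Then Σ_{1 ≤ k ≤ m, gcd(k,m)=1} c_{m_1}(k−a_1) c_{m_2}(k−a_2) = (−1)^{ω(gcd(m_1,m_2))} ψ(gcd(m_1,m_2)) if both m_1 and m_2 are squarefree, and 0 otherwise, where ψ(n) = n·∏_{p|n}(1+1/p) is the Dedekind psi function. -/

import Mathlib

open Finset ArithmeticFunction
open scoped ArithmeticFunction.Moebius

/-- The Ramanujan sum `c_n(k) = ∑_{d ∣ gcd(k,n)} d · μ(n/d)`, for integer `k`. -/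
def ramanujanSum (n : ℕ) (k : ℤ) : ℤ :=
  ∑ d ∈ (Int.gcd k n).divisors, (d : ℤ) * moebius (n / d)

namespace EvalR


lemma dvd_int_gcd (x : ℤ) (n d : ℕ) :
    d ∣ Int.gcd x n ↔ (d ∣ n ∧ (d : ℤ) ∣ x) := by
  constructor
  · intro h
    have h1 : (d:ℤ) ∣ x := (Int.natCast_dvd_natCast.2 h).trans (Int.gcd_dvd_left _ _)
    have h2 : (d:ℤ) ∣ (n:ℤ) := (Int.natCast_dvd_natCast.2 h).trans (Int.gcd_dvd_right _ _)
    exact ⟨Int.natCast_dvd_natCast.1 h2, h1⟩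
  · rintro ⟨h1, h2⟩
    exact Int.natCast_dvd_natCast.1 (Int.dvd_coe_gcd h2 (Int.natCast_dvd_natCast.2 h1))

lemma ramanujanSum_eq (n : ℕ) (hn : n ≠ 0) (x : ℤ) :
    ramanujanSum n x = ∑ d ∈ n.divisors, if (d : ℤ) ∣ x then (d : ℤ) * μ (n / d) else 0 := by
  rw [ramanujanSum, ← Finset.sum_filter]
  congr 1
  ext d
  simp only [Nat.mem_divisors, Finset.mem_filter, dvd_int_gcd]
  have hg : Int.gcd x n ≠ 0 := by
    simp [Int.gcd_eq_zero_iff, hn]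
  tauto

lemma card_fiber_mul_card {G H : Type*} [Group G] [Group H] [Fintype G] [Fintype H]
    [DecidableEq G] [DecidableEq H] (f : G →* H) (hf : Function.Surjective f) (y : H) :
    (Finset.univ.filter fun x => f x = y).card * Fintype.card H = Fintype.card G := by
  obtain ⟨x₀, hx₀⟩ := hf y
  have e1 : (Finset.univ.filter fun x => f x = y).card = Nat.card (f.ker) := by
    rw [Nat.card_eq_fintype_card, ← Fintype.card_coe]
    refine Fintype.card_congr ⟨fun x => ⟨x₀⁻¹ * x.1, ?_⟩, fun z => ⟨x₀ * z.1, ?_⟩, ?_, ?_⟩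
    · have := (Finset.mem_filter.1 x.2).2
      simp [MonoidHom.mem_ker, map_mul, this, hx₀]
    · have := z.2
      simp only [MonoidHom.mem_ker] at this
      simp [Finset.mem_filter, map_mul, this, hx₀]
    · intro x; ext; simp
    · intro z; ext; simp
  rw [e1]
  have e2 : Nat.card H = Nat.card (G ⧸ f.ker) :=
    (Nat.card_congr (QuotientGroup.quotientKerEquivOfSurjective f hf).toEquiv).symm
  have := Subgroup.card_eq_card_quotient_mul_card_subgroup f.ker
  rw [Nat.card_eq_fintype_card (α := G)] at this
  rw [← Nat.card_eq_fintype_card (α := H), e2, mul_comm, ← this]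

lemma count_ap (m d : ℕ) (hm : 0 < m) (hdm : d ∣ m) (a : ℤ) (had : Int.gcd a d = 1) :
    ((Icc 1 m).filter (fun k => Nat.gcd k m = 1 ∧ (d : ℤ) ∣ (k : ℤ) - a)).card
      * Nat.totient d = Nat.totient m := by
  rcases eq_or_lt_of_le (Nat.one_le_iff_ne_zero.2 hm.ne') with h1 | h2
  · -- m = 1
    have hm1 : m = 1 := h1.symm
    subst hm1
    have hd1 : d = 1 := Nat.eq_one_of_dvd_one (h1 ▸ hdm)
    subst hd1
    simp [Finset.filter_true_of_mem]
  · -- m ≥ 2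
    haveI : NeZero m := ⟨hm.ne'⟩
    have hd0 : d ≠ 0 := fun h => by subst h; exact hm.ne' (Nat.eq_zero_of_zero_dvd hdm)
    haveI : NeZero d := ⟨hd0⟩
    -- the unit (a : ZMod d)
    obtain ⟨u, v, huv⟩ := Int.isCoprime_iff_gcd_eq_one.mpr had
    have hau : (a : ZMod d) * (u : ZMod d) = 1 := by
      have := congrArg (fun z : ℤ => (z : ZMod d)) huv
      push_cast at this
      rw [ZMod.natCast_self] at this
      rw [← this]; ring
    have hunit : IsUnit ((a : ℤ) : ZMod d) := IsUnit.of_mul_eq_one _ hau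
    set b : (ZMod d)ˣ := hunit.unit with hb
    have hbcoe : (b : ZMod d) = (a : ZMod d) := hunit.unit_spec
    set f := ZMod.unitsMap hdm with hfdef
    have hcard := card_fiber_mul_card f (ZMod.unitsMap_surjective hdm) b
    rw [ZMod.card_units_eq_totient, ZMod.card_units_eq_totient] at hcard
    rw [← hcard]
    congr 1
    -- card bijection
    refine Finset.card_bij (fun k hk => ZMod.unitOfCoprime k (Finset.mem_filter.1 hk).2.1) ?_ ?_ ?_
    · intro k hk
      obtain ⟨hk1, hk2, hk3⟩ := Finset.mem_filter.1 hk
      simp only [Finset.mem_filter, Finset.mem_univ, true_and]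
      ext
      rw [hbcoe]
      show (ZMod.castHom hdm (ZMod d)) _ = _
      rw [ZMod.coe_unitOfCoprime, map_natCast]
      have : (((k : ℤ) - a : ℤ) : ZMod d) = 0 := (ZMod.intCast_zmod_eq_zero_iff_dvd _ _).2 hk3
      push_cast at this
      linear_combination this
    · intro k₁ hk₁ k₂ hk₂ heq
      have h1 := Finset.mem_filter.1 hk₁
      have h2 := Finset.mem_filter.1 hk₂
      have : (k₁ : ZMod m) = (k₂ : ZMod m) := by
        have := congrArg (fun w : (ZMod m)ˣ => (w : ZMod m)) heq
        simpa [ZMod.coe_unitOfCoprime] using this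
      have hmod := (ZMod.natCast_eq_natCast_iff _ _ _).1 this
      have hk₁m : k₁ < m := by
        rcases Nat.lt_or_ge k₁ m with h | h
        · exact h
        · exfalso
          have : k₁ = m := le_antisymm (Finset.mem_Icc.1 h1.1).2 h
          subst this
          simp [Nat.gcd_self] at h1
          omega
      have hk₂m : k₂ < m := by
        rcases Nat.lt_or_ge k₂ m with h | h
        · exact h
        · exfalso
          have : k₂ = m := le_antisymm (Finset.mem_Icc.1 h2.1).2 h
          subst this
          simp [Nat.gcd_self] at h2
          omega
      exact hmod.eq_of_lt_of_lt hk₁m hk₂m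
    · intro w hw
      have hw' := (Finset.mem_filter.1 hw).2
      set k := ((w : ZMod m)).val with hkdef
      have hco : Nat.Coprime k m := ZMod.val_coe_unit_coprime w
      have hklt : k < m := ZMod.val_lt _
      have hk0 : k ≠ 0 := by
        intro h
        rw [h] at hco
        exact absurd (Nat.coprime_zero_left m |>.1 hco) h2.ne'
      have hcast : ((k : ℕ) : ZMod m) = (w : ZMod m) := by
        rw [hkdef, ZMod.natCast_val, ZMod.cast_id]
      have hmem : k ∈ Finset.Icc 1 m := Finset.mem_Icc.2 ⟨Nat.one_le_iff_ne_zero.2 hk0, hklt.le⟩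
      have hdvd : (d : ℤ) ∣ (k : ℤ) - a := by
        rw [← ZMod.intCast_zmod_eq_zero_iff_dvd]
        push_cast
        have : (k : ZMod d) = (a : ZMod d) := by
          have := congrArg (fun z : (ZMod d)ˣ => (z : ZMod d)) hw'
          rw [hbcoe] at this
          rw [← this]
          show _ = (ZMod.castHom hdm (ZMod d)) (w : ZMod m)
          rw [← hcast, map_natCast]
        exact sub_eq_zero.mpr this
      refine ⟨k, Finset.mem_filter.2 ⟨hmem, hco, hdvd⟩, ?_⟩
      ext
      rw [ZMod.coe_unitOfCoprime, hcast]

lemma count_ap2 (m d₁ d₂ : ℕ) (hm : 0 < m) (h1 : d₁ ∣ m) (h2 : d₂ ∣ m)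
    (hco : Nat.gcd d₁ d₂ = 1) (a₁ a₂ : ℤ) (hg1 : Int.gcd a₁ d₁ = 1) (hg2 : Int.gcd a₂ d₂ = 1) :
    ((Icc 1 m).filter (fun k => Nat.gcd k m = 1 ∧
        ((d₁ : ℤ) ∣ (k : ℤ) - a₁ ∧ (d₂ : ℤ) ∣ (k : ℤ) - a₂))).card
      * (Nat.totient d₁ * Nat.totient d₂) = Nat.totient m := by
  have hcop : Nat.Coprime d₁ d₂ := hco
  obtain ⟨u, v, huv⟩ : IsCoprime (d₁ : ℤ) (d₂ : ℤ) := by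
    rw [Int.isCoprime_iff_gcd_eq_one]
    simpa [Int.gcd_natCast_natCast] using hco
  have hcopZ : IsCoprime (d₁ : ℤ) (d₂ : ℤ) := ⟨u, v, huv⟩
  set a : ℤ := a₂ * (u * d₁) + a₁ * (v * d₂) with hadef
  have hd₁a : (d₁ : ℤ) ∣ a - a₁ := by
    have hh : a - a₁ = (a₂ - a₁) * u * d₁ := by
      have h' : v * d₂ = 1 - u * d₁ := by linarith [huv]
      rw [hadef, h']; ring
    rw [hh]; exact Dvd.intro_left _ rfl
  have hd₂a : (d₂ : ℤ) ∣ a - a₂ := by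
    have hh : a - a₂ = (a₁ - a₂) * v * d₂ := by
      have h' : u * d₁ = 1 - v * d₂ := by linarith [huv]
      rw [hadef, h']; ring
    rw [hh]; exact Dvd.intro_left _ rfl
  have hiso1 : IsCoprime a (d₁ : ℤ) := by
    obtain ⟨t, ht⟩ := hd₁a
    have ha1 : IsCoprime a₁ (d₁ : ℤ) := Int.isCoprime_iff_gcd_eq_one.mpr hg1
    have hh : a = a₁ + (d₁ : ℤ) * t := by linarith [ht]
    rw [hh]
    exact IsCoprime.add_mul_left_left ha1 t
  have hiso2 : IsCoprime a (d₂ : ℤ) := by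
    obtain ⟨t, ht⟩ := hd₂a
    have ha2 : IsCoprime a₂ (d₂ : ℤ) := Int.isCoprime_iff_gcd_eq_one.mpr hg2
    have hh : a = a₂ + (d₂ : ℤ) * t := by linarith [ht]
    rw [hh]
    exact IsCoprime.add_mul_left_left ha2 t
  have hga : Int.gcd a ((d₁ * d₂ : ℕ) : ℤ) = 1 := by
    rw [← Int.isCoprime_iff_gcd_eq_one]
    push_cast
    exact hiso1.mul_right hiso2
  have hdd : d₁ * d₂ ∣ m := hcop.mul_dvd_of_dvd_of_dvd h1 h2
  have hfil : ∀ k : ℕ, (((d₁ * d₂ : ℕ) : ℤ) ∣ (k : ℤ) - a) ↔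
      ((d₁ : ℤ) ∣ (k : ℤ) - a₁ ∧ (d₂ : ℤ) ∣ (k : ℤ) - a₂) := by
    intro k
    constructor
    · intro h
      push_cast at h
      have hh1 : (d₁ : ℤ) ∣ (k : ℤ) - a := dvd_trans ⟨d₂, by push_cast; ring⟩ h
      have hh2 : (d₂ : ℤ) ∣ (k : ℤ) - a := dvd_trans ⟨d₁, by push_cast; ring⟩ h
      constructor
      · have := dvd_add hh1 hd₁a
        simpa [sub_add_sub_cancel] using this
      · have := dvd_add hh2 hd₂a
        simpa [sub_add_sub_cancel] using this
    · rintro ⟨hh1, hh2⟩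
      have e1 : (d₁ : ℤ) ∣ (k : ℤ) - a := by
        have := dvd_sub hh1 hd₁a
        simpa using this
      have e2 : (d₂ : ℤ) ∣ (k : ℤ) - a := by
        have := dvd_sub hh2 hd₂a
        simpa using this
      push_cast
      exact hcopZ.mul_dvd e1 e2
  have := count_ap m (d₁ * d₂) hm hdd a hga
  rw [Nat.totient_mul hcop] at this
  rw [← this]
  congr 2
  apply Finset.filter_congr
  intro k _
  simp only [hfil k]

lemma count_zero (m d₁ d₂ : ℕ) (hco : Nat.gcd d₁ d₂ ≠ 1) (a₁ a₂ : ℤ) (ha : |a₁ - a₂| = 1) :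
    ((Icc 1 m).filter (fun k => Nat.gcd k m = 1 ∧
        ((d₁ : ℤ) ∣ (k : ℤ) - a₁ ∧ (d₂ : ℤ) ∣ (k : ℤ) - a₂))).card = 0 := by
  rw [Finset.card_eq_zero, Finset.filter_eq_empty_iff]
  rintro k _ ⟨_, hk1, hk2⟩
  set g := Nat.gcd d₁ d₂ with hg
  have hgd : (g : ℤ) ∣ a₁ - a₂ := by
    have e1 : (g : ℤ) ∣ (k : ℤ) - a₁ :=
      dvd_trans (Int.natCast_dvd_natCast.2 (Nat.gcd_dvd_left _ _)) hk1
    have e2 : (g : ℤ) ∣ (k : ℤ) - a₂ :=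
      dvd_trans (Int.natCast_dvd_natCast.2 (Nat.gcd_dvd_right _ _)) hk2
    have := dvd_sub e2 e1
    simpa using this
  have : (g : ℤ) ∣ 1 := by
    rcases abs_eq (by norm_num : (0:ℤ) ≤ 1) |>.mp ha with h | h
    · rwa [h] at hgd
    · rw [h] at hgd; exact (dvd_neg.mp hgd)
  exact hco (Nat.eq_one_of_dvd_one (Int.ofNat_dvd.mp this))

lemma sum_divisors_coprime_mul {M : Type*} [AddCommMonoid M] {m n : ℕ}
    (h : Nat.Coprime m n) (hm : m ≠ 0) (hn : n ≠ 0) (f : ℕ → M) :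
    ∑ d ∈ (m * n).divisors, f d = ∑ u ∈ m.divisors, ∑ v ∈ n.divisors, f (u * v) := by
  rw [← Finset.sum_product']
  refine Finset.sum_nbij' (i := fun d => (Nat.gcd d m, Nat.gcd d n))
    (j := fun p => p.1 * p.2) ?_ ?_ ?_ ?_ ?_
  · intro d hd
    have hd' := Nat.mem_divisors.1 hd
    simp only [Finset.mem_product, Nat.mem_divisors]
    exact ⟨⟨Nat.gcd_dvd_right _ _, hm⟩, ⟨Nat.gcd_dvd_right _ _, hn⟩⟩
  · intro p hp
    simp only [Finset.mem_product, Nat.mem_divisors] at hp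
    exact Nat.mem_divisors.2 ⟨mul_dvd_mul hp.1.1 hp.2.1, mul_ne_zero hm hn⟩
  · intro d hd
    have hd' := (Nat.mem_divisors.1 hd).1
    exact Nat.gcd_mul_gcd_eq_iff_dvd_mul_of_coprime h |>.2 hd'
  · intro p hp
    simp only [Finset.mem_product, Nat.mem_divisors] at hp
    obtain ⟨⟨hu, _⟩, hv, _⟩ := hp
    have huv₁ : Nat.gcd (p.1 * p.2) m = p.1 := by
      rw [Nat.Coprime.gcd_mul_right_cancel p.1 (Nat.Coprime.coprime_dvd_left hv h.symm)]
      exact Nat.gcd_eq_left hu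
    have huv₂ : Nat.gcd (p.1 * p.2) n = p.2 := by
      rw [Nat.Coprime.gcd_mul_left_cancel p.2 (Nat.Coprime.coprime_dvd_left hu h)]
      exact Nat.gcd_eq_left hv
    simp [huv₁, huv₂]
  · intro d hd
    have hd' := (Nat.mem_divisors.1 hd).1
    exact congrArg f (Nat.gcd_mul_gcd_eq_iff_dvd_mul_of_coprime h |>.2 hd').symm

lemma gcd_mul_mul {m₁ m₂ n₁ n₂ : ℕ} (h : Nat.Coprime (m₁ * m₂) (n₁ * n₂)) :
    Nat.gcd (m₁ * n₁) (m₂ * n₂) = Nat.gcd m₁ m₂ * Nat.gcd n₁ n₂ := by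
  have h11 : Nat.Coprime m₁ n₁ := Nat.Coprime.coprime_dvd_right (dvd_mul_right _ _)
    (Nat.Coprime.coprime_dvd_left (dvd_mul_right _ _) h)
  have h12 : Nat.Coprime m₁ n₂ := Nat.Coprime.coprime_dvd_right (dvd_mul_left _ _)
    (Nat.Coprime.coprime_dvd_left (dvd_mul_right _ _) h)
  have h21 : Nat.Coprime m₂ n₁ := Nat.Coprime.coprime_dvd_right (dvd_mul_right _ _)
    (Nat.Coprime.coprime_dvd_left (dvd_mul_left _ _) h)
  have h22 : Nat.Coprime m₂ n₂ := Nat.Coprime.coprime_dvd_right (dvd_mul_left _ _)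
    (Nat.Coprime.coprime_dvd_left (dvd_mul_left _ _) h)
  apply Nat.dvd_antisymm
  · set G := Nat.gcd (m₁ * n₁) (m₂ * n₂) with hGdef
    have hGdvd : G ∣ m₁ * n₁ := Nat.gcd_dvd_left _ _
    have key : Nat.gcd G m₁ * Nat.gcd G n₁ = G :=
      (Nat.gcd_mul_gcd_eq_iff_dvd_mul_of_coprime h11).2 hGdvd
    have e1 : Nat.gcd G m₁ ∣ Nat.gcd m₁ m₂ := by
      apply Nat.dvd_gcd (Nat.gcd_dvd_right _ _)
      have : Nat.gcd G m₁ ∣ m₂ * n₂ := (Nat.gcd_dvd_left _ _).trans (Nat.gcd_dvd_right _ _)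
      exact (Nat.Coprime.dvd_of_dvd_mul_right
        (Nat.Coprime.coprime_dvd_left (Nat.gcd_dvd_right _ _) h12) this)
    have e2 : Nat.gcd G n₁ ∣ Nat.gcd n₁ n₂ := by
      apply Nat.dvd_gcd (Nat.gcd_dvd_right _ _)
      have : Nat.gcd G n₁ ∣ m₂ * n₂ := (Nat.gcd_dvd_left _ _).trans (Nat.gcd_dvd_right _ _)
      exact (Nat.Coprime.coprime_dvd_left (Nat.gcd_dvd_right _ _) h21.symm).dvd_of_dvd_mul_left this
    calc G = Nat.gcd G m₁ * Nat.gcd G n₁ := key.symm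
    _ ∣ Nat.gcd m₁ m₂ * Nat.gcd n₁ n₂ := mul_dvd_mul e1 e2
  · apply Nat.Coprime.mul_dvd_of_dvd_of_dvd
    · exact Nat.Coprime.coprime_dvd_left (Nat.gcd_dvd_left _ _)
        (Nat.Coprime.coprime_dvd_right (Nat.gcd_dvd_left _ _) h11)
    · exact Nat.dvd_gcd ((Nat.gcd_dvd_left _ _).trans (dvd_mul_right _ _))
        ((Nat.gcd_dvd_right _ _).trans (dvd_mul_right _ _))
    · exact Nat.dvd_gcd ((Nat.gcd_dvd_left _ _).trans (dvd_mul_left _ _))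
        ((Nat.gcd_dvd_right _ _).trans (dvd_mul_left _ _))

lemma lcm_mul_mul {m₁ m₂ n₁ n₂ : ℕ} (hm₁ : m₁ ≠ 0) (hm₂ : m₂ ≠ 0) (hn₁ : n₁ ≠ 0) (hn₂ : n₂ ≠ 0)
    (h : Nat.Coprime (m₁ * m₂) (n₁ * n₂)) :
    Nat.lcm (m₁ * n₁) (m₂ * n₂) = Nat.lcm m₁ m₂ * Nat.lcm n₁ n₂ := by
  have hg := gcd_mul_mul h
  have hpos : 0 < Nat.gcd m₁ m₂ * Nat.gcd n₁ n₂ :=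
    Nat.mul_pos (Nat.gcd_pos_of_pos_left _ (Nat.pos_of_ne_zero hm₁))
      (Nat.gcd_pos_of_pos_left _ (Nat.pos_of_ne_zero hn₁))
  apply Nat.eq_of_mul_eq_mul_left hpos
  calc Nat.gcd m₁ m₂ * Nat.gcd n₁ n₂ * Nat.lcm (m₁ * n₁) (m₂ * n₂)
      = Nat.gcd (m₁ * n₁) (m₂ * n₂) * Nat.lcm (m₁ * n₁) (m₂ * n₂) := by rw [hg]
    _ = (m₁ * n₁) * (m₂ * n₂) := Nat.gcd_mul_lcm _ _
    _ = (m₁ * m₂) * (n₁ * n₂) := by ring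
    _ = (Nat.gcd m₁ m₂ * Nat.lcm m₁ m₂) * (Nat.gcd n₁ n₂ * Nat.lcm n₁ n₂) := by
        rw [Nat.gcd_mul_lcm, Nat.gcd_mul_lcm]
    _ = Nat.gcd m₁ m₂ * Nat.gcd n₁ n₂ * (Nat.lcm m₁ m₂ * Nat.lcm n₁ n₂) := by ring

noncomputable def Tsum (m₁ m₂ : ℕ) : ℚ :=
  ∑ d₁ ∈ m₁.divisors, ∑ d₂ ∈ m₂.divisors,
    if Nat.gcd d₁ d₂ = 1 then
      ((μ (m₁ / d₁) : ℚ) * (μ (m₂ / d₂) : ℚ) * d₁ * d₂) /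
        ((Nat.totient d₁ : ℚ) * (Nat.totient d₂ : ℚ))
    else 0

noncomputable def G (p α : ℕ) : ℚ :=
  ∑ i ∈ range (α + 1), (μ (p ^ (α - i)) : ℚ) * (p : ℚ) ^ i / (Nat.totient (p ^ i) : ℚ)

noncomputable def RHSf (m₁ m₂ : ℕ) : ℚ :=
  if Squarefree m₁ ∧ Squarefree m₂ then
    (-1 : ℚ) ^ (Nat.gcd m₁ m₂).primeFactors.card *
      ((Nat.gcd m₁ m₂ : ℚ) * ∏ p ∈ (Nat.gcd m₁ m₂).primeFactors, (1 + 1 / (p : ℚ)))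
  else 0

noncomputable def Afun (m₁ m₂ : ℕ) : ℚ := (Nat.totient (Nat.lcm m₁ m₂) : ℚ) * Tsum m₁ m₂

lemma G_zero (p : ℕ) : G p 0 = 1 := by simp [G]

lemma G_one {p : ℕ} (hp : p.Prime) : G p 1 = 1 / ((p : ℚ) - 1) := by
  have hp1 : (1:ℚ) ≤ (p:ℚ) := by exact_mod_cast hp.one_lt.le
  have hne : (p : ℚ) - 1 ≠ 0 := by
    have : (1:ℚ) < (p:ℚ) := by exact_mod_cast hp.one_lt
    linarith
  rw [G]
  rw [Finset.sum_range_succ, Finset.sum_range_one]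
  simp only [pow_zero, pow_one, Nat.sub_zero, Nat.sub_self, Nat.totient_one]
  rw [moebius_apply_prime hp, Nat.totient_prime hp]
  have : ((p - 1 : ℕ) : ℚ) = (p : ℚ) - 1 := by
    have := hp.one_lt.le
    push_cast [Nat.cast_sub this]
    ring
  rw [this]
  push_cast
  field_simp
  rw [moebius_apply_one]
  push_cast
  ring

lemma G_ge_two {p : ℕ} (hp : p.Prime) {α : ℕ} (hα : 2 ≤ α) : G p α = 0 := by
  obtain ⟨a, rfl⟩ : ∃ a, α = a + 2 := ⟨α - 2, by omega⟩
  have hp0 : (p:ℚ) ≠ 0 := by exact_mod_cast hp.pos.ne'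
  have hne : (p : ℚ) - 1 ≠ 0 := by
    have : (1:ℚ) < (p:ℚ) := by exact_mod_cast hp.one_lt
    linarith
  have hcast : ∀ n : ℕ, 0 < n → ((Nat.totient (p ^ n) : ℚ)) = (p:ℚ)^(n-1) * ((p:ℚ) - 1) := by
    intro n hn
    rw [Nat.totient_prime_pow hp hn]
    push_cast [Nat.cast_sub hp.one_lt.le]
    ring
  rw [G]
  rw [Finset.sum_range_succ, Finset.sum_range_succ]
  have hz : ∑ i ∈ range (a + 1), (μ (p ^ (a + 2 - i)) : ℚ) * (p : ℚ) ^ i / (Nat.totient (p ^ i) : ℚ) = 0 := by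
    apply Finset.sum_eq_zero
    intro i hi
    have hi' : i < a + 1 := Finset.mem_range.1 hi
    have : μ (p ^ (a + 2 - i)) = 0 := by
      rw [moebius_apply_prime_pow hp (by omega)]
      simp only [ite_eq_right_iff]
      intro h; omega
    rw [this]
    simp
  rw [hz]
  have e1 : a + 2 - (a + 1) = 1 := by omega
  have e2 : a + 2 - (a + 2) = 0 := by omega
  rw [e1, e2]
  rw [pow_one, pow_zero, moebius_apply_prime hp, moebius_apply_one]
  rw [hcast (a+1) (by omega), hcast (a+2) (by omega)]
  have e3 : a + 1 - 1 = a := by omega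
  have e4 : a + 2 - 1 = a + 1 := by omega
  rw [e3, e4]
  have hpa : (p:ℚ)^a ≠ 0 := pow_ne_zero _ hp0
  have hpa1 : (p:ℚ)^(a+1) ≠ 0 := pow_ne_zero _ hp0
  push_cast
  field_simp
  ring

lemma Tsum_comm (m₁ m₂ : ℕ) : Tsum m₁ m₂ = Tsum m₂ m₁ := by
  rw [Tsum, Tsum, Finset.sum_comm]
  apply Finset.sum_congr rfl; intro d₂ _
  apply Finset.sum_congr rfl; intro d₁ _
  simp only [Nat.gcd_comm d₂ d₁]
  split_ifs with h
  · ring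
  · rfl

lemma Tsum_pp_one (p : ℕ) (hp : p.Prime) (α : ℕ) : Tsum (p ^ α) 1 = G p α := by
  rw [Tsum, G]
  simp only [Nat.divisors_one, Finset.sum_singleton, Nat.gcd_one_right, if_true,
    Nat.div_one, moebius_apply_one, Nat.totient_one, Nat.cast_one]
  rw [Nat.divisors_prime_pow hp, Finset.sum_map]
  apply Finset.sum_congr rfl
  intro i hi
  have hi' : i ≤ α := by have := Finset.mem_range.1 hi; omega
  simp only [Function.Embedding.coeFn_mk]
  rw [Nat.pow_div hi' hp.pos]
  push_cast
  ring

lemma Tsum_pp (p : ℕ) (hp : p.Prime) {α β : ℕ} (hα : 1 ≤ α) (hβ : 1 ≤ β) :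
    Tsum (p ^ α) (p ^ β) =
      (μ (p ^ α) : ℚ) * G p β + (μ (p ^ β) : ℚ) * G p α - (μ (p ^ α) : ℚ) * (μ (p ^ β) : ℚ) := by
  rw [Tsum]
  simp only [Nat.divisors_prime_pow hp, Finset.sum_map, Function.Embedding.coeFn_mk]
  have hcop : ∀ i j : ℕ, (Nat.gcd (p^i) (p^j) = 1) ↔ (i = 0 ∨ j = 0) := by
    intro i j
    constructor
    · intro h
      by_contra hc
      push_neg at hc
      have h1 : p ∣ p ^ i := dvd_pow_self p (by omega)
      have h2 : p ∣ p ^ j := dvd_pow_self p (by omega)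
      have := Nat.dvd_gcd h1 h2
      rw [h] at this
      exact hp.one_lt.ne' (Nat.eq_one_of_dvd_one this)
    · rintro (rfl | rfl) <;> simp [Nat.coprime_pow_right_iff, Nat.coprime_pow_left_iff]
  -- term function
  set t : ℕ → ℕ → ℚ := fun i j =>
    ((μ (p ^ α / p ^ i) : ℚ) * (μ (p ^ β / p ^ j) : ℚ) * (p^i : ℕ) * (p^j : ℕ)) /
      ((Nat.totient (p^i) : ℚ) * (Nat.totient (p^j) : ℚ)) with ht
  have step1 : ∑ i ∈ range (α+1), ∑ j ∈ range (β+1),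
      (if Nat.gcd (p^i) (p^j) = 1 then t i j else 0)
      = ∑ i ∈ range (α+1), ∑ j ∈ range (β+1),
        ((if i = 0 then t i j else 0) + (if j = 0 then t i j else 0)
          - (if i = 0 ∧ j = 0 then t i j else 0)) := by
    apply Finset.sum_congr rfl; intro i _
    apply Finset.sum_congr rfl; intro j _
    simp only [hcop i j]
    by_cases h1 : i = 0 <;> by_cases h2 : j = 0 <;> simp [h1, h2]
  rw [step1]
  simp only [Finset.sum_add_distrib, Finset.sum_sub_distrib]
  have A : ∑ i ∈ range (α+1), ∑ j ∈ range (β+1), (if i = 0 then t i j else 0)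
      = ∑ j ∈ range (β+1), t 0 j := by
    rw [Finset.sum_comm]
    apply Finset.sum_congr rfl; intro j _
    rw [Finset.sum_ite_eq' (range (α+1)) 0 (fun i => t i j)]
    simp
  have B : ∑ i ∈ range (α+1), ∑ j ∈ range (β+1), (if j = 0 then t i j else 0)
      = ∑ i ∈ range (α+1), t i 0 := by
    apply Finset.sum_congr rfl; intro i _
    rw [Finset.sum_ite_eq' (range (β+1)) 0 (fun j => t i j)]
    simp
  have C : ∑ i ∈ range (α+1), ∑ j ∈ range (β+1), (if i = 0 ∧ j = 0 then t i j else 0)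
      = t 0 0 := by
    rw [Finset.sum_comm]
    rw [Finset.sum_eq_single 0]
    · rw [Finset.sum_eq_single 0]
      · simp
      · intro i _ hi; simp [hi]
      · intro h; exact absurd (Finset.mem_range.2 (by omega)) h
    · intro j _ hj
      apply Finset.sum_eq_zero; intro i _
      simp [hj]
    · intro h; exact absurd (Finset.mem_range.2 (by omega)) h
  rw [A, B, C]
  have hA : ∑ j ∈ range (β+1), t 0 j = (μ (p ^ α) : ℚ) * G p β := by
    rw [G, Finset.mul_sum]
    apply Finset.sum_congr rfl; intro j hj
    have hj' : j ≤ β := by have := Finset.mem_range.1 hj; omega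
    rw [ht]
    simp only [pow_zero, Nat.div_one, Nat.totient_one]
    rw [Nat.pow_div hj' hp.pos]
    push_cast
    ring
  have hB : ∑ i ∈ range (α+1), t i 0 = (μ (p ^ β) : ℚ) * G p α := by
    rw [G, Finset.mul_sum]
    apply Finset.sum_congr rfl; intro i hi
    have hi' : i ≤ α := by have := Finset.mem_range.1 hi; omega
    rw [ht]
    simp only [pow_zero, Nat.div_one, Nat.totient_one]
    rw [Nat.pow_div hi' hp.pos]
    push_cast
    ring
  have hC : t 0 0 = (μ (p ^ α) : ℚ) * (μ (p ^ β) : ℚ) := by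
    rw [ht]
    simp
  rw [hA, hB, hC]

lemma not_squarefree_pp {p : ℕ} (hp : p.Prime) {α : ℕ} (hα : 2 ≤ α) : ¬ Squarefree (p ^ α) := by
  intro h
  have : p * p ∣ p ^ α := by
    have : p ^ 2 ∣ p ^ α := pow_dvd_pow p hα
    simpa [sq] using this
  exact hp.one_lt.ne' (Nat.isUnit_iff.mp (h p this))

lemma Afun_pp (p : ℕ) (hp : p.Prime) (α β : ℕ) : Afun (p ^ α) (p ^ β) = RHSf (p ^ α) (p ^ β) := by
  have hppos := hp.pos
  have hp0 : (p:ℚ) ≠ 0 := by exact_mod_cast hppos.ne'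
  have hne : (p : ℚ) - 1 ≠ 0 := by
    have : (1:ℚ) < (p:ℚ) := by exact_mod_cast hp.one_lt
    linarith
  have hsq1 : Squarefree (1 : ℕ) := squarefree_one
  have hsqp : Squarefree p := hp.squarefree
  have hcastp : ((p - 1 : ℕ) : ℚ) = (p:ℚ) - 1 := by
    push_cast [Nat.cast_sub hp.one_lt.le]; ring
  -- helper for the diagonal case
  rcases Nat.lt_or_ge α 2 with hα2 | hα2
  · rcases Nat.lt_or_ge β 2 with hβ2 | hβ2
    · interval_cases α <;> interval_cases β
      · -- (0,0)
        have h00 : Tsum 1 1 = 1 := by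
          have := Tsum_pp_one p hp 0
          rwa [pow_zero, G_zero] at this
        rw [pow_zero, Afun, h00, RHSf, Nat.lcm_self, Nat.gcd_self]
        simp [hsq1]
      · -- (0,1)
        have h01 : Tsum 1 p = 1 / ((p:ℚ) - 1) := by
          have := Tsum_pp_one p hp 1
          rwa [pow_one, G_one hp, Tsum_comm] at this
        rw [pow_zero, pow_one, Afun, h01, RHSf]
        rw [Nat.lcm_one_left, Nat.gcd_one_left]
        simp [Nat.totient_prime hp, hsq1, hsqp, hcastp, hne]
      · -- (1, 0)
        have h10 : Tsum p 1 = 1 / ((p:ℚ) - 1) := by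
          have := Tsum_pp_one p hp 1
          rwa [pow_one, G_one hp] at this
        rw [pow_zero, pow_one, Afun, h10, RHSf]
        rw [Nat.lcm_one_right, Nat.gcd_one_right]
        simp [Nat.totient_prime hp, hsq1, hsqp, hcastp, hne]
      · -- (1,1)
        have h11 := Tsum_pp p hp (le_refl 1) (le_refl 1)
        rw [pow_one] at h11
        rw [pow_one, Afun, h11]
        simp only [pow_one, G_one hp, moebius_apply_prime hp]
        rw [RHSf, Nat.lcm_self, Nat.gcd_self]
        rw [if_pos ⟨hsqp, hsqp⟩, Nat.Prime.primeFactors hp]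
        simp only [Finset.card_singleton, Finset.prod_singleton, pow_one]
        rw [Nat.totient_prime hp, hcastp]
        push_cast
        field_simp
        ring
    · -- α ≤ 1, β ≥ 2
      have hT : Tsum (p ^ α) (p ^ β) = 0 := by
        rcases Nat.eq_zero_or_pos α with rfl | hα1
        · rw [pow_zero, Tsum_comm, Tsum_pp_one p hp β, G_ge_two hp hβ2]
        · rw [Tsum_pp p hp hα1 (by omega), G_ge_two hp hβ2,
            moebius_apply_prime_pow hp (by omega : β ≠ 0)]
          have : ¬ (β = 1) := by omega
          simp [this]
      rw [Afun, hT, RHSf, if_neg]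
      · ring
      · rintro ⟨_, h2⟩
        exact not_squarefree_pp hp hβ2 h2
  · -- α ≥ 2
    have hT : Tsum (p ^ α) (p ^ β) = 0 := by
      rcases Nat.eq_zero_or_pos β with rfl | hβ1
      · rw [pow_zero, Tsum_pp_one p hp α, G_ge_two hp hα2]
      · rw [Tsum_pp p hp (by omega) hβ1, G_ge_two hp hα2,
          moebius_apply_prime_pow hp (by omega : α ≠ 0)]
        have : ¬ (α = 1) := by omega
        simp [this]
    rw [Afun, hT, RHSf, if_neg]
    · ring
    · rintro ⟨h1, _⟩
      exact not_squarefree_pp hp hα2 h1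

lemma Tsum_mul {m₁ m₂ n₁ n₂ : ℕ} (hm₁ : m₁ ≠ 0) (hm₂ : m₂ ≠ 0) (hn₁ : n₁ ≠ 0) (hn₂ : n₂ ≠ 0)
    (h : Nat.Coprime (m₁ * m₂) (n₁ * n₂)) :
    Tsum (m₁ * n₁) (m₂ * n₂) = Tsum m₁ m₂ * Tsum n₁ n₂ := by
  have h11 : Nat.Coprime m₁ n₁ := Nat.Coprime.coprime_dvd_right (dvd_mul_right _ _)
    (Nat.Coprime.coprime_dvd_left (dvd_mul_right _ _) h)
  have h12 : Nat.Coprime m₁ n₂ := Nat.Coprime.coprime_dvd_right (dvd_mul_left _ _)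
    (Nat.Coprime.coprime_dvd_left (dvd_mul_right _ _) h)
  have h21 : Nat.Coprime m₂ n₁ := Nat.Coprime.coprime_dvd_right (dvd_mul_right _ _)
    (Nat.Coprime.coprime_dvd_left (dvd_mul_left _ _) h)
  have h22 : Nat.Coprime m₂ n₂ := Nat.Coprime.coprime_dvd_right (dvd_mul_left _ _)
    (Nat.Coprime.coprime_dvd_left (dvd_mul_left _ _) h)
  -- the local terms
  set g : ℕ → ℕ → ℚ := fun u₁ u₂ =>
    if Nat.gcd u₁ u₂ = 1 then
      ((μ (m₁ / u₁) : ℚ) * (μ (m₂ / u₂) : ℚ) * u₁ * u₂) /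
        ((Nat.totient u₁ : ℚ) * (Nat.totient u₂ : ℚ))
    else 0 with hg
  set k : ℕ → ℕ → ℚ := fun v₁ v₂ =>
    if Nat.gcd v₁ v₂ = 1 then
      ((μ (n₁ / v₁) : ℚ) * (μ (n₂ / v₂) : ℚ) * v₁ * v₂) /
        ((Nat.totient v₁ : ℚ) * (Nat.totient v₂ : ℚ))
    else 0 with hk
  have key : Tsum (m₁ * n₁) (m₂ * n₂)
      = ∑ u₁ ∈ m₁.divisors, ∑ v₁ ∈ n₁.divisors, ∑ u₂ ∈ m₂.divisors, ∑ v₂ ∈ n₂.divisors,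
          g u₁ u₂ * k v₁ v₂ := by
    rw [Tsum, sum_divisors_coprime_mul h11 hm₁ hn₁]
    apply Finset.sum_congr rfl; intro u₁ hu₁
    apply Finset.sum_congr rfl; intro v₁ hv₁
    rw [sum_divisors_coprime_mul h22 hm₂ hn₂]
    apply Finset.sum_congr rfl; intro u₂ hu₂
    apply Finset.sum_congr rfl; intro v₂ hv₂
    have hu₁' : u₁ ∣ m₁ := (Nat.mem_divisors.1 hu₁).1
    have hv₁' : v₁ ∣ n₁ := (Nat.mem_divisors.1 hv₁).1
    have hu₂' : u₂ ∣ m₂ := (Nat.mem_divisors.1 hu₂).1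
    have hv₂' : v₂ ∣ n₂ := (Nat.mem_divisors.1 hv₂).1
    -- condition equivalence
    have hcond : (Nat.gcd (u₁ * v₁) (u₂ * v₂) = 1) ↔ (Nat.gcd u₁ u₂ = 1 ∧ Nat.gcd v₁ v₂ = 1) := by
      have c12 : Nat.Coprime u₁ v₂ := Nat.Coprime.coprime_dvd_right hv₂'
        (Nat.Coprime.coprime_dvd_left hu₁' h12)
      have c21 : Nat.Coprime v₁ u₂ := (Nat.Coprime.coprime_dvd_right hv₁'
        (Nat.Coprime.coprime_dvd_left hu₂' h21)).symm
      constructor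
      · intro hc
        have hc' : Nat.Coprime (u₁ * v₁) (u₂ * v₂) := hc
        rw [Nat.coprime_mul_iff_left] at hc'
        obtain ⟨hcu, hcv⟩ := hc'
        rw [Nat.coprime_mul_iff_right] at hcu hcv
        exact ⟨hcu.1, hcv.2⟩
      · rintro ⟨hc1, hc2⟩
        have : Nat.Coprime (u₁ * v₁) (u₂ * v₂) := by
          rw [Nat.coprime_mul_iff_left]
          constructor
          · rw [Nat.coprime_mul_iff_right]; exact ⟨hc1, c12⟩
          · rw [Nat.coprime_mul_iff_right]; exact ⟨c21, hc2⟩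
        exact this
    -- moebius factorizations
    have hμ1 : (μ (m₁ * n₁ / (u₁ * v₁)) : ℤ) = μ (m₁ / u₁) * μ (n₁ / v₁) := by
      rw [← Nat.div_mul_div_comm hu₁' hv₁']
      exact isMultiplicative_moebius.map_mul_of_coprime
        (Nat.Coprime.coprime_dvd_left (Nat.div_dvd_of_dvd hu₁')
          (Nat.Coprime.coprime_dvd_right (Nat.div_dvd_of_dvd hv₁') h11))
    have hμ2 : (μ (m₂ * n₂ / (u₂ * v₂)) : ℤ) = μ (m₂ / u₂) * μ (n₂ / v₂) := by
      rw [← Nat.div_mul_div_comm hu₂' hv₂']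
      exact isMultiplicative_moebius.map_mul_of_coprime
        (Nat.Coprime.coprime_dvd_left (Nat.div_dvd_of_dvd hu₂')
          (Nat.Coprime.coprime_dvd_right (Nat.div_dvd_of_dvd hv₂') h22))
    have hφ1 : Nat.totient (u₁ * v₁) = Nat.totient u₁ * Nat.totient v₁ :=
      Nat.totient_mul (Nat.Coprime.coprime_dvd_right hv₁'
        (Nat.Coprime.coprime_dvd_left hu₁' h11))
    have hφ2 : Nat.totient (u₂ * v₂) = Nat.totient u₂ * Nat.totient v₂ :=
      Nat.totient_mul (Nat.Coprime.coprime_dvd_right hv₂'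
        (Nat.Coprime.coprime_dvd_left hu₂' h22))
    rw [hg, hk]
    simp only [hcond, hμ1, hμ2, hφ1, hφ2]
    by_cases hc1 : Nat.gcd u₁ u₂ = 1
    · by_cases hc2 : Nat.gcd v₁ v₂ = 1
      · rw [if_pos ⟨hc1, hc2⟩, if_pos hc1, if_pos hc2]
        push_cast
        ring
      · rw [if_neg (by tauto), if_neg hc2, mul_zero]
    · by_cases hc2 : Nat.gcd v₁ v₂ = 1
      · rw [if_neg (by tauto), if_neg hc1, zero_mul]
      · rw [if_neg (by tauto), if_neg hc1, zero_mul]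
  rw [key, Tsum, Tsum, Finset.sum_mul_sum]
  apply Finset.sum_congr rfl; intro u₁ _
  apply Finset.sum_congr rfl; intro v₁ _
  rw [Finset.sum_mul_sum]

lemma four_coprime (h : Nat.Coprime (m₁ * m₂) (n₁ * n₂)) :
    Nat.Coprime m₁ n₁ ∧ Nat.Coprime m₁ n₂ ∧ Nat.Coprime m₂ n₁ ∧ Nat.Coprime m₂ n₂ := by
  refine ⟨?_, ?_, ?_, ?_⟩ <;>
    [exact Nat.Coprime.coprime_dvd_right (dvd_mul_right _ _)
      (Nat.Coprime.coprime_dvd_left (dvd_mul_right _ _) h);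
     exact Nat.Coprime.coprime_dvd_right (dvd_mul_left _ _)
      (Nat.Coprime.coprime_dvd_left (dvd_mul_right _ _) h);
     exact Nat.Coprime.coprime_dvd_right (dvd_mul_right _ _)
      (Nat.Coprime.coprime_dvd_left (dvd_mul_left _ _) h);
     exact Nat.Coprime.coprime_dvd_right (dvd_mul_left _ _)
      (Nat.Coprime.coprime_dvd_left (dvd_mul_left _ _) h)]

lemma Afun_mul (hm₁ : m₁ ≠ 0) (hm₂ : m₂ ≠ 0) (hn₁ : n₁ ≠ 0) (hn₂ : n₂ ≠ 0)
    (h : Nat.Coprime (m₁ * m₂) (n₁ * n₂)) :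
    Afun (m₁ * n₁) (m₂ * n₂) = Afun m₁ m₂ * Afun n₁ n₂ := by
  obtain ⟨h11, h12, h21, h22⟩ := four_coprime h
  have hlcmco : Nat.Coprime (Nat.lcm m₁ m₂) (Nat.lcm n₁ n₂) := by
    apply Nat.Coprime.coprime_dvd_right (Nat.lcm_dvd (dvd_mul_right _ _) (dvd_mul_left _ _))
    apply Nat.Coprime.coprime_dvd_left (Nat.lcm_dvd (dvd_mul_right _ _) (dvd_mul_left _ _))
    exact h
  rw [Afun, Afun, Afun, lcm_mul_mul hm₁ hm₂ hn₁ hn₂ h, Nat.totient_mul hlcmco,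
    Tsum_mul hm₁ hm₂ hn₁ hn₂ h]
  push_cast
  ring

lemma RHSf_mul (hm₁ : m₁ ≠ 0) (hm₂ : m₂ ≠ 0) (hn₁ : n₁ ≠ 0) (hn₂ : n₂ ≠ 0)
    (h : Nat.Coprime (m₁ * m₂) (n₁ * n₂)) :
    RHSf (m₁ * n₁) (m₂ * n₂) = RHSf m₁ m₂ * RHSf n₁ n₂ := by
  obtain ⟨h11, h12, h21, h22⟩ := four_coprime h
  have hsq1 : Squarefree (m₁ * n₁) ↔ Squarefree m₁ ∧ Squarefree n₁ := Nat.squarefree_mul h11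
  have hsq2 : Squarefree (m₂ * n₂) ↔ Squarefree m₂ ∧ Squarefree n₂ := Nat.squarefree_mul h22
  rw [RHSf, RHSf, RHSf]
  by_cases c1 : Squarefree m₁ ∧ Squarefree m₂
  · by_cases c2 : Squarefree n₁ ∧ Squarefree n₂
    · rw [if_pos ⟨hsq1.2 ⟨c1.1, c2.1⟩, hsq2.2 ⟨c1.2, c2.2⟩⟩, if_pos c1, if_pos c2]
      have hgm : Nat.gcd m₁ m₂ ≠ 0 := Nat.gcd_ne_zero_left hm₁
      have hgn : Nat.gcd n₁ n₂ ≠ 0 := Nat.gcd_ne_zero_left hn₁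
      have hgco : Nat.Coprime (Nat.gcd m₁ m₂) (Nat.gcd n₁ n₂) :=
        Nat.Coprime.coprime_dvd_right (Nat.gcd_dvd_left _ _)
          (Nat.Coprime.coprime_dvd_left (Nat.gcd_dvd_left _ _) h11)
      rw [gcd_mul_mul h, Nat.Coprime.primeFactors_mul hgco,
        Finset.card_union_of_disjoint (Nat.Coprime.disjoint_primeFactors hgco),
        Finset.prod_union (Nat.Coprime.disjoint_primeFactors hgco)]
      push_cast
      ring
    · rw [if_neg, if_neg c2, mul_zero]
      rw [hsq1, hsq2]
      tauto
  · rw [if_neg, if_neg c1, zero_mul]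
    rw [hsq1, hsq2]
    tauto

lemma Afun_eq_RHSf : ∀ N : ℕ, ∀ m₁ m₂ : ℕ, m₁ * m₂ = N → m₁ ≠ 0 → m₂ ≠ 0 →
    Afun m₁ m₂ = RHSf m₁ m₂ := by
  intro N
  induction N using Nat.strong_induction_on with
  | _ N ih =>
    intro m₁ m₂ hN hm₁ hm₂
    rcases eq_or_lt_of_le (Nat.one_le_iff_ne_zero.2 (hN ▸ mul_ne_zero hm₁ hm₂ : N ≠ 0))
      with h1 | h2
    · -- N = 1
      have hN1 : m₁ * m₂ = 1 := hN.trans h1.symm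
      have : m₁ = 1 ∧ m₂ = 1 := mul_eq_one.mp hN1
      obtain ⟨rfl, rfl⟩ := this
      have := Afun_pp 2 Nat.prime_two 0 0
      simpa using this
    · -- N ≥ 2; pick a prime
      obtain ⟨p, hp, hpN⟩ := Nat.exists_prime_and_dvd (by omega : N ≠ 1)
      set α := m₁.factorization p with hα
      set β := m₂.factorization p with hβ
      set m₁' := m₁ / p ^ α with hm₁'
      set m₂' := m₂ / p ^ β with hm₂'
      have e₁ : p ^ α * m₁' = m₁ := Nat.ordProj_mul_ordCompl_eq_self m₁ p
      have e₂ : p ^ β * m₂' = m₂ := Nat.ordProj_mul_ordCompl_eq_self m₂ p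
      have hpm₁' : ¬ p ∣ m₁' := Nat.not_dvd_ordCompl hp hm₁
      have hpm₂' : ¬ p ∣ m₂' := Nat.not_dvd_ordCompl hp hm₂
      have hm₁'0 : m₁' ≠ 0 := Nat.ordCompl_pos p hm₁ |>.ne'
      have hm₂'0 : m₂' ≠ 0 := Nat.ordCompl_pos p hm₂ |>.ne'
      have hco : Nat.Coprime (p ^ α * p ^ β) (m₁' * m₂') := by
        have hbase : Nat.Coprime p (m₁' * m₂') := by
          rw [Nat.coprime_mul_iff_right]
          exact ⟨(Nat.Prime.coprime_iff_not_dvd hp).2 hpm₁',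
            (Nat.Prime.coprime_iff_not_dvd hp).2 hpm₂'⟩
        rw [Nat.coprime_mul_iff_left]
        exact ⟨Nat.Coprime.pow_left _ hbase, Nat.Coprime.pow_left _ hbase⟩
      have hαβ : 1 ≤ α + β := by
        have : p ∣ m₁ * m₂ := hN ▸ hpN
        rcases hp.dvd_mul.1 this with hd | hd
        · have : 1 ≤ α := by
            rw [hα]
            exact (Nat.Prime.factorization_pos_of_dvd hp hm₁ hd)
          omega
        · have : 1 ≤ β := by
            rw [hβ]
            exact (Nat.Prime.factorization_pos_of_dvd hp hm₂ hd)
          omega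
      have hlt : m₁' * m₂' < N := by
        have hNe : N = p ^ (α + β) * (m₁' * m₂') := by
          rw [← hN, ← e₁, ← e₂, pow_add]; ring
        have h2p : 2 ≤ p ^ (α + β) :=
          le_trans hp.two_le (Nat.le_self_pow (by omega) p)
        have hpos : 0 < m₁' * m₂' := Nat.pos_of_ne_zero (mul_ne_zero hm₁'0 hm₂'0)
        calc m₁' * m₂' = 1 * (m₁' * m₂') := (one_mul _).symm
          _ < p ^ (α + β) * (m₁' * m₂') := by
              exact Nat.mul_lt_mul_of_lt_of_le (by omega) le_rfl hpos
          _ = N := hNe.symm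
      have IH := ih (m₁' * m₂') hlt m₁' m₂' rfl hm₁'0 hm₂'0
      calc Afun m₁ m₂ = Afun (p ^ α * m₁') (p ^ β * m₂') := by rw [e₁, e₂]
        _ = Afun (p ^ α) (p ^ β) * Afun m₁' m₂' := Afun_mul (pow_ne_zero _ hp.pos.ne')
              (pow_ne_zero _ hp.pos.ne') hm₁'0 hm₂'0 hco
        _ = RHSf (p ^ α) (p ^ β) * RHSf m₁' m₂' := by rw [Afun_pp p hp, IH]
        _ = RHSf (p ^ α * m₁') (p ^ β * m₂') := (RHSf_mul (pow_ne_zero _ hp.pos.ne')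
              (pow_ne_zero _ hp.pos.ne') hm₁'0 hm₂'0 hco).symm
        _ = RHSf m₁ m₂ := by rw [e₁, e₂]

lemma int_gcd_restrict {a : ℤ} {d n : ℕ} (hdn : d ∣ n) (h : Int.gcd a n = 1) :
    Int.gcd a d = 1 := by
  have k1 : ((Int.gcd a d : ℕ) : ℤ) ∣ a := Int.gcd_dvd_left _ _
  have k2 : ((Int.gcd a d : ℕ) : ℤ) ∣ (n : ℤ) :=
    (Int.gcd_dvd_right _ _).trans (Int.natCast_dvd_natCast.2 hdn)
  have k3 : ((Int.gcd a d : ℕ) : ℤ) ∣ ((Int.gcd a n : ℕ) : ℤ) := Int.dvd_coe_gcd k1 k2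
  rw [h] at k3
  exact Nat.eq_one_of_dvd_one (Int.ofNat_dvd.mp (by exact_mod_cast k3))

end EvalR

open EvalR in
theorem eval_R_a1_a2 (m₁ m₂ : ℕ) (hm₁ : 0 < m₁) (hm₂ : 0 < m₂)
    (a₁ a₂ : ℤ) (ha₁ : Int.gcd a₁ m₁ = 1) (ha₂ : Int.gcd a₂ m₂ = 1)
    (ha : |a₁ - a₂| = 1) :
    ∑ k ∈ (Icc 1 (Nat.lcm m₁ m₂)).filter (fun k => Nat.gcd k (Nat.lcm m₁ m₂) = 1),
      (ramanujanSum m₁ ((k : ℤ) - a₁) : ℚ) * (ramanujanSum m₂ ((k : ℤ) - a₂) : ℚ) =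
    if Squarefree m₁ ∧ Squarefree m₂ then
      (-1 : ℚ) ^ (Nat.gcd m₁ m₂).primeFactors.card *
        ((Nat.gcd m₁ m₂ : ℚ) * ∏ p ∈ (Nat.gcd m₁ m₂).primeFactors, (1 + 1 / (p : ℚ)))
    else 0 := by
  set m := Nat.lcm m₁ m₂ with hmdef
  have hm : 0 < m := Nat.pos_of_ne_zero (Nat.lcm_ne_zero hm₁.ne' hm₂.ne')
  have h1m : m₁ ∣ m := Nat.dvd_lcm_left _ _
  have h2m : m₂ ∣ m := Nat.dvd_lcm_right _ _
  -- Step 1: expand the summand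
  have hexp : ∀ k : ℕ,
      (ramanujanSum m₁ ((k : ℤ) - a₁) : ℚ) * (ramanujanSum m₂ ((k : ℤ) - a₂) : ℚ)
      = ∑ d₁ ∈ m₁.divisors, ∑ d₂ ∈ m₂.divisors,
          (if ((d₁:ℤ) ∣ (k:ℤ) - a₁ ∧ (d₂:ℤ) ∣ (k:ℤ) - a₂) then
            ((d₁:ℚ) * (μ (m₁/d₁) : ℚ) * ((d₂:ℚ) * (μ (m₂/d₂) : ℚ))) else 0) := by
    intro k
    rw [ramanujanSum_eq m₁ hm₁.ne' _, ramanujanSum_eq m₂ hm₂.ne' _]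
    rw [Int.cast_sum, Int.cast_sum, Finset.sum_mul_sum]
    apply Finset.sum_congr rfl; intro d₁ _
    apply Finset.sum_congr rfl; intro d₂ _
    by_cases h1 : (d₁:ℤ) ∣ (k:ℤ) - a₁ <;> by_cases h2 : (d₂:ℤ) ∣ (k:ℤ) - a₂ <;>
      simp [h1, h2]
  rw [Finset.sum_congr rfl (fun k _ => hexp k)]
  rw [Finset.sum_comm]
  have swap2 : ∀ d₁ ∈ m₁.divisors,
      (∑ k ∈ (Icc 1 m).filter (fun k => Nat.gcd k m = 1), ∑ d₂ ∈ m₂.divisors,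
        (if ((d₁:ℤ) ∣ (k:ℤ) - a₁ ∧ (d₂:ℤ) ∣ (k:ℤ) - a₂) then
            ((d₁:ℚ) * (μ (m₁/d₁) : ℚ) * ((d₂:ℚ) * (μ (m₂/d₂) : ℚ))) else 0))
      = ∑ d₂ ∈ m₂.divisors, ∑ k ∈ (Icc 1 m).filter (fun k => Nat.gcd k m = 1),
        (if ((d₁:ℤ) ∣ (k:ℤ) - a₁ ∧ (d₂:ℤ) ∣ (k:ℤ) - a₂) then
            ((d₁:ℚ) * (μ (m₁/d₁) : ℚ) * ((d₂:ℚ) * (μ (m₂/d₂) : ℚ))) else 0) :=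
    fun d₁ _ => Finset.sum_comm
  rw [Finset.sum_congr rfl swap2]
  -- Step 2: inner sums to counts
  have hcount : ∀ d₁ ∈ m₁.divisors, ∀ d₂ ∈ m₂.divisors,
      (∑ k ∈ (Icc 1 m).filter (fun k => Nat.gcd k m = 1),
        (if ((d₁:ℤ) ∣ (k:ℤ) - a₁ ∧ (d₂:ℤ) ∣ (k:ℤ) - a₂) then
            ((d₁:ℚ) * (μ (m₁/d₁) : ℚ) * ((d₂:ℚ) * (μ (m₂/d₂) : ℚ))) else 0))
      = (Nat.totient m : ℚ) *
          (if Nat.gcd d₁ d₂ = 1 then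
            ((μ (m₁ / d₁) : ℚ) * (μ (m₂ / d₂) : ℚ) * d₁ * d₂) /
              ((Nat.totient d₁ : ℚ) * (Nat.totient d₂ : ℚ))
          else 0) := by
    intro d₁ hd₁ d₂ hd₂
    have hd₁' : d₁ ∣ m₁ := (Nat.mem_divisors.1 hd₁).1
    have hd₂' : d₂ ∣ m₂ := (Nat.mem_divisors.1 hd₂).1
    have hd₁0 : d₁ ≠ 0 := by
      intro h; subst h; exact hm₁.ne' (Nat.eq_zero_of_zero_dvd hd₁')
    have hd₂0 : d₂ ≠ 0 := by
      intro h; subst h; exact hm₂.ne' (Nat.eq_zero_of_zero_dvd hd₂')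
    rw [← Finset.sum_filter, Finset.filter_filter, Finset.sum_const, nsmul_eq_mul]
    by_cases hc : Nat.gcd d₁ d₂ = 1
    · have hcard := count_ap2 m d₁ d₂ hm (hd₁'.trans h1m) (hd₂'.trans h2m) hc a₁ a₂
        (int_gcd_restrict hd₁' ha₁) (int_gcd_restrict hd₂' ha₂)
      have hφ1 : (Nat.totient d₁ : ℚ) ≠ 0 := by
        exact_mod_cast (Nat.totient_pos.2 (Nat.pos_of_ne_zero hd₁0)).ne'
      have hφ2 : (Nat.totient d₂ : ℚ) ≠ 0 := by
        exact_mod_cast (Nat.totient_pos.2 (Nat.pos_of_ne_zero hd₂0)).ne'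
      have hcardQ : ((((Icc 1 m).filter (fun k => Nat.gcd k m = 1 ∧
          ((d₁ : ℤ) ∣ (k : ℤ) - a₁ ∧ (d₂ : ℤ) ∣ (k : ℤ) - a₂))).card : ℚ))
          * ((Nat.totient d₁ : ℚ) * (Nat.totient d₂ : ℚ)) = (Nat.totient m : ℚ) := by
        exact_mod_cast hcard
      rw [if_pos hc, ← hcardQ]
      field_simp
    · have hcard := count_zero m d₁ d₂ hc a₁ a₂ ha
      rw [hcard, if_neg hc]
      simp
  rw [Finset.sum_congr rfl (fun d₁ hd₁ => Finset.sum_congr rfl (fun d₂ hd₂ => hcount d₁ hd₁ d₂ hd₂))]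
  have : ∑ d₁ ∈ m₁.divisors, ∑ d₂ ∈ m₂.divisors, (Nat.totient m : ℚ) *
          (if Nat.gcd d₁ d₂ = 1 then
            ((μ (m₁ / d₁) : ℚ) * (μ (m₂ / d₂) : ℚ) * d₁ * d₂) /
              ((Nat.totient d₁ : ℚ) * (Nat.totient d₂ : ℚ))
          else 0) = Afun m₁ m₂ := by
    rw [Afun, Tsum, Finset.mul_sum]
    apply Finset.sum_congr rfl; intro d₁ _
    rw [Finset.mul_sum]
  rw [this, Afun_eq_RHSf (m₁ * m₂) m₁ m₂ rfl hm₁.ne' hm₂.ne', RHSf]
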